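/- The language a*ba* ∪ a^+ over {a,b} is not strictly locally testable: for every width j ≥ 2 and every set F_j ⊆ {a,b,#}^j, Loc(F_j) ≠ a*ba* ∪ a^+. -/

import Mathlib

/-!
Common framework from the paper "Higher-order Operator Precedence Languages":
tagged words over an alphabet `α` (with a distinguished end-mark letter
`hash`), the tag set Δ = {[, ], ⊙}, tagged `k`-word factors, conflictual sets,
the strictly-locally-testable tagged language `Loc(Φ)`, handles, reductions
`⇝_Φ`, and the (tagged) maximal languages `RedBar Φ` / `Red Φ`.

Conventions: an end-word `⍟` is the alternating word `(#⊙)^m #` of (tagged)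
length `k-2`, so that it contributes `(k-1)/2` end-marks on each side,
matching all the examples of the paper.
-/

namespace HOP

/-- The three tags `[`, `]`, `⊙`. -/
inductive Tagg : Type where
  | lb : Tagg
  | rb : Tagg
  | dot : Tagg
deriving DecidableEq

/-- Symbols: either a terminal letter of `α` or a tag. -/
abbrev Sym (α : Type) := α ⊕ Tagg

/-- The projection `σ` erasing all tags. -/
def erase {α : Type} (w : List (Sym α)) : List α := w.filterMap Sum.getLeft?

/-- Tagged words: words in `Σ(ΔΣ)*`, i.e. alternating terminals and tags,
beginning and ending with a terminal. -/
inductive IsTagged {α : Type} : List (Sym α) → Prop where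
  | single (a : α) : IsTagged [Sum.inl a]
  | cons (a : α) (t : Tagg) {w : List (Sym α)} :
      IsTagged w → IsTagged (Sum.inl a :: Sum.inr t :: w)

/-- `φ_k(w)`: the set of tagged `k`-words occurring as factors of `w`. -/
def taggedFactors {α : Type} (k : ℕ) (w : List (Sym α)) : Set (List (Sym α)) :=
  {u | u.length = k ∧ IsTagged u ∧ u <:+: w}

/-- A set of tagged words is conflictual iff it contains two distinct words
with the same tag-erasure. -/
def Conflictual {α : Type} (S : Set (List (Sym α))) : Prop :=
  ∃ x ∈ S, ∃ y ∈ S, x ≠ y ∧ erase x = erase y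

def NonConflictual {α : Type} (S : Set (List (Sym α))) : Prop := ¬ Conflictual S

/-- `S` is a set of tagged `k`-words. -/
def TaggedKWords {α : Type} (k : ℕ) (S : Set (List (Sym α))) : Prop :=
  ∀ u ∈ S, IsTagged u ∧ u.length = k

/-- `hashWord hash n = # ⊙ # ⊙ … #` with `n+1` end-marks (tagged length `2n+1`). -/
def hashWord {α : Type} (hash : α) : ℕ → List (Sym α)
  | 0 => [Sum.inl hash]
  | n + 1 => Sum.inl hash :: Sum.inr Tagg.dot :: hashWord hash n

/-- The end-word `⍟ ∈ (#⊙)*#` used with width `k`: it has tagged length `k-2`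
(for odd `k ≥ 3`), i.e. `(k-1)/2` end-marks. -/
def endwFor {α : Type} (hash : α) (k : ℕ) : List (Sym α) := hashWord hash ((k - 3) / 2)

/-- `wrap hash k w = ⍟ [ w ] ⍟`. -/
def wrap {α : Type} (hash : α) (k : ℕ) (w : List (Sym α)) : List (Sym α) :=
  endwFor hash k ++ Sum.inr Tagg.lb :: (w ++ Sum.inr Tagg.rb :: endwFor hash k)

/-- `finalWord hash k = ⍟ ⊙ ⍟`, the target of a complete reduction. -/
def finalWord {α : Type} (hash : α) (k : ℕ) : List (Sym α) :=
  endwFor hash k ++ Sum.inr Tagg.dot :: endwFor hash k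

/-- The (full-word form of the) `k`-strictly-locally-testable tagged language:
all tagged `k`-word factors belong to `Φ`.  A tagged word `w` is in `Loc(Φ)`
in the sense of the paper iff `wrap hash k w ∈ LocFull k Φ`. -/
def LocFull {α : Type} (k : ℕ) (Φ : Set (List (Sym α))) : Set (List (Sym α)) :=
  {w | IsTagged w ∧ taggedFactors k w ⊆ Φ}

/-- `Loc(Φ)` as a set of tagged words `w` (tested on `⍟[w]⍟`). -/
def LocTagged {α : Type} (hash : α) (k : ℕ) (Φ : Set (List (Sym α))) :
    Set (List (Sym α)) :=
  {w | IsTagged w ∧ wrap hash k w ∈ LocFull k Φ}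

/-- The body `x` of a handle `[x]`: a tagged word over `Σ - {#}` whose tags are
all `⊙`. -/
def IsHandleBody {α : Type} (hash : α) (x : List (Sym α)) : Prop :=
  IsTagged x ∧ (∀ t : Tagg, Sum.inr t ∈ x → t = Tagg.dot) ∧ Sum.inl hash ∉ x

/-- One reduction step `w[x]z ⇝_Φ w s z`, allowed when `[x]` is a handle and
both source and target have all their tagged `k`-factors in `Φ`. -/
def RStep {α : Type} (hash : α) (k : ℕ) (Φ : Set (List (Sym α)))
    (u v : List (Sym α)) : Prop :=
  ∃ w x z, ∃ s : Tagg, IsHandleBody hash x ∧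
    u = w ++ Sum.inr Tagg.lb :: (x ++ Sum.inr Tagg.rb :: z) ∧
    v = w ++ Sum.inr s :: z ∧
    u ∈ LocFull k Φ ∧ v ∈ LocFull k Φ

/-- `⇝*_Φ`. -/
def Reduces {α : Type} (hash : α) (k : ℕ) (Φ : Set (List (Sym α))) :
    List (Sym α) → List (Sym α) → Prop :=
  Relation.ReflTransGen (RStep hash k Φ)

/-- The tagged maximal language `Red̄(Φ)`. -/
def RedBar {α : Type} (hash : α) (k : ℕ) (Φ : Set (List (Sym α))) :
    Set (List (Sym α)) :=
  {w | IsTagged w ∧ Reduces hash k Φ (wrap hash k w) (finalWord hash k)}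

/-- The maximal language `Red(Φ) = σ(Red̄(Φ))`. -/
def Red {α : Type} (hash : α) (k : ℕ) (Φ : Set (List (Sym α))) : Set (List α) :=
  erase '' RedBar hash k Φ

/-- Length-`j` factors of a plain word. -/
def plainFactors {α : Type} (j : ℕ) (w : List α) : Set (List α) :=
  {u | u.length = j ∧ u <:+: w}

/-- The `j`-strictly-locally-testable (plain) language `Loc(F)`, with
end-words `#^(j-1)`; as usual the language is `ε`-free and over `Σ - {#}`. -/
def LocPlain {α : Type} (hash : α) (j : ℕ) (F : Set (List α)) : Set (List α) :=
  {x | x ≠ [] ∧ hash ∉ x ∧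
    plainFactors j
      (List.replicate (j - 1) hash ++ x ++ List.replicate (j - 1) hash) ⊆ F}

end HOP

namespace HOP

/-- The alphabet `{a, b, #}`. -/
inductive ABH : Type where
  | a : ABH
  | b : ABH
  | h : ABH
deriving DecidableEq

open ABH

/-- `L = a* b a* ∪ a⁺` over `{a, b}`. -/
def L8 : Set (List ABH) :=
  {x | (∃ n m : ℕ, x = List.replicate n a ++ b :: List.replicate m a) ∨
       (∃ n : ℕ, 1 ≤ n ∧ x = List.replicate n a)}

lemma infix_left' {α : Type*} {s u t A B : List α} (h : s ++ u ++ t = A ++ B)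
    (hl : s.length + u.length ≤ A.length) : u <:+: A := by
  have h1 : s ++ u <+: A ++ B := ⟨t, by simpa [List.append_assoc] using h⟩
  have h2 : s ++ u <+: A :=
    List.prefix_of_prefix_length_le h1 (List.prefix_append A B) (by simpa using hl)
  exact ((List.suffix_append s u).isInfix).trans h2.isInfix

lemma infix_right' {α : Type*} {s u t C D : List α} (h : s ++ u ++ t = C ++ D)
    (hl : u.length + t.length ≤ D.length) : u <:+: D := by
  have h1 : u ++ t <:+ C ++ D := ⟨s, by simpa [List.append_assoc] using h⟩
  have h2 : u ++ t <:+ D :=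
    List.suffix_of_suffix_length_le h1 (List.suffix_append C D) (by simpa using hl)
  exact ((List.prefix_append u t).isInfix).trans h2.isInfix

/-- `a* b a* ∪ a⁺` is not strictly locally testable: no width `j ≥ 2` and no
`j`-word set `F_j ⊆ {a,b,#}^j` define it. -/
theorem not_slt : ∀ j : ℕ, 2 ≤ j → ∀ F : Set (List ABH),
    (∀ u ∈ F, u.length = j) → LocPlain ABH.h j F ≠ L8 := by
  intro j hj F hF heq
  set H : List ABH := List.replicate (j-1) ABH.h with hH
  set Aj : List ABH := List.replicate j ABH.a with hAj
  set x1 : List ABH := Aj ++ b :: Aj with hx1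
  set x2 : List ABH := Aj ++ b :: (Aj ++ b :: Aj) with hx2
  -- x1 ∈ L8, hence its wrapper's factors are in F
  have hx1L : x1 ∈ LocPlain ABH.h j F := by
    rw [heq]; exact Or.inl ⟨j, j, rfl⟩
  have hFac : plainFactors j (H ++ x1 ++ H) ⊆ F := hx1L.2.2
  -- x2 ∈ LocPlain
  have hx2L : x2 ∈ LocPlain ABH.h j F := by
    refine ⟨by simp [hx2, hAj], ?_, ?_⟩
    · simp [hx2, hAj, List.mem_replicate]
    · intro u hu
      obtain ⟨hlen, s, t, hst⟩ := hu
      apply hFac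
      refine ⟨hlen, ?_⟩
      -- total length of H ++ x2 ++ H is 5j
      have hlens : s.length + j + t.length = 5 * j := by
        have := congrArg List.length hst
        simp [hx2, hAj, hH, hlen] at this
        omega
      by_cases hc : s.length + j ≤ 3 * j
      · -- u is an infix of A := H ++ Aj ++ b :: Aj, a prefix of H ++ x1 ++ H
        have hdec : s ++ u ++ t = (H ++ Aj ++ b :: Aj) ++ (b :: Aj ++ H) := by
          rw [hst]; simp [hx2, hH]
        have h1 : u <:+: H ++ Aj ++ b :: Aj :=
          infix_left' hdec (by simp [hH, hAj, hlen]; omega)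
        refine h1.trans ⟨[], H, ?_⟩
        simp [hx1]
      · -- u is an infix of D := a^(j-1) ++ b :: Aj ++ H, a suffix of H ++ x1 ++ H
        have hdec : s ++ u ++ t =
            (H ++ Aj ++ [b, a]) ++ (List.replicate (j-1) a ++ b :: Aj ++ H) := by
          rw [hst]
          have : Aj = a :: List.replicate (j-1) a := by
            rw [hAj, ← List.replicate_succ]
            congr 1
            omega
          conv_lhs => rw [hx2]
          rw [this]
          simp [hH]
        have h1 : u <:+: List.replicate (j-1) a ++ b :: Aj ++ H := by
          refine infix_right' hdec ?_
          simp [hH, hAj, hlen]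
          omega
        refine h1.trans ⟨H ++ [a], [], ?_⟩
        have : Aj = a :: List.replicate (j-1) a := by
          rw [hAj, ← List.replicate_succ]; congr 1; omega
        rw [hx1, this]
        simp
  -- but x2 ∉ L8: it has two b's
  rw [heq] at hx2L
  have hcnt : x2.count b = 2 := by
    simp [hx2, hAj, List.count_replicate]
  rcases hx2L with ⟨n, m, hx⟩ | ⟨n, _, hx⟩
  · rw [hx] at hcnt
    simp [List.count_replicate] at hcnt
  · rw [hx] at hcnt
    simp [List.count_replicate] at hcnt

end HOP
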